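/- Let $2 < q < 3$ and define the residual $\mathcal{R}(a,b) = |a|^{q-2}a - |b|^{q-2}b - (q-1)|b|^{q-2}(a-b)$ for real $a, b$. Then for a bounded domain $\Omega$ and $u, \phi \in L^q(\Omega)$: $\|\mathcal{R}(u,\phi)\|_{L^{q'}(\Omega)} \le (q-1)\|u - \phi\|_{L^q(\Omega)}^{q-1}$, where $q' = q/(q-1)$. -/

import Mathlib

open MeasureTheory Real NNReal ENNReal

private lemma rpow_sub_rpow_le' {p x y : ℝ} (hy : 0 ≤ y) (hxy : y ≤ x) (hp : 0 ≤ p)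
    (hp1 : p ≤ 1) : x ^ p - y ^ p ≤ (x - y) ^ p := by
  have h := NNReal.rpow_add_le_add_rpow ((x - y).toNNReal) (y.toNNReal) hp hp1
  have h' : (((x - y).toNNReal : ℝ) + ((y.toNNReal : ℝ))) ^ p
      ≤ ((x - y).toNNReal : ℝ) ^ p + (y.toNNReal : ℝ) ^ p := by
    have := NNReal.coe_le_coe.mpr h
    push_cast at this
    convert this using 2 <;> push_cast <;> ring
  rw [Real.coe_toNNReal _ (by linarith), Real.coe_toNNReal _ hy] at h'
  have hxe : (x - y) + y = x := by ring
  rw [hxe] at h'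
  linarith

private lemma abs_rpow_sub_abs_rpow_le {p s t : ℝ} (hp : 0 ≤ p) (hp1 : p ≤ 1) :
    |s| ^ p - |t| ^ p ≤ |s - t| ^ p := by
  rcases le_total (|t|) (|s|) with h | h
  · calc |s| ^ p - |t| ^ p ≤ (|s| - |t|) ^ p := rpow_sub_rpow_le' (abs_nonneg t) h hp hp1
    _ ≤ |s - t| ^ p := Real.rpow_le_rpow (by linarith [abs_nonneg t])
        (by linarith [abs_sub_abs_le_abs_sub s t]) hp
  · have h1 : |s| ^ p ≤ |t| ^ p := Real.rpow_le_rpow (abs_nonneg s) h hp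
    have := Real.rpow_nonneg (abs_nonneg (s - t)) p
    linarith

private lemma abs_abs_rpow_sub_abs_rpow {p s t : ℝ} (hp : 0 ≤ p) (hp1 : p ≤ 1) :
    |(|s| ^ p - |t| ^ p)| ≤ |s - t| ^ p := by
  rw [abs_sub_le_iff]
  refine ⟨abs_rpow_sub_abs_rpow_le hp hp1, ?_⟩
  rw [show |s - t| = |t - s| by rw [abs_sub_comm]]
  exact abs_rpow_sub_abs_rpow_le hp hp1

/-- derivative of `t ↦ |t|^p * t` for `0 < p < 1`. -/
private lemma hasDerivAt_abs_rpow_mul_self {p : ℝ} (hp : 0 < p) (hp1 : p < 1) (x : ℝ) :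
    HasDerivAt (fun t : ℝ => |t| ^ p * t) ((p + 1) * |x| ^ p) x := by
  rcases lt_trichotomy x 0 with hx | hx | hx
  · have h1 : HasDerivAt (fun t : ℝ => (-t) ^ (p + 1)) ((p + 1) * (-x) ^ p * (-1)) x := by
      have := (Real.hasDerivAt_rpow_const (x := -x) (p := p + 1)
        (Or.inl (by linarith))).comp x (hasDerivAt_neg x)
      simpa [show p + 1 - 1 = p by ring, Function.comp_def] using this
    have h2 : HasDerivAt (fun t : ℝ => -((-t) ^ (p + 1))) ((p + 1) * (-x) ^ p) x := by
      simpa using h1.fun_neg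
    rw [abs_of_neg hx]
    refine h2.congr_of_eventuallyEq ?_
    filter_upwards [eventually_lt_nhds hx] with t ht
    rw [abs_of_neg ht, Real.rpow_add_one (by linarith) p]
    ring
  · subst hx
    rw [hasDerivAt_iff_tendsto_slope]
    have : ∀ t : ℝ, slope (fun t : ℝ => |t| ^ p * t) 0 t = |t| ^ p := by
      intro t
      rcases eq_or_ne t 0 with rfl | ht
      · simp [slope, Real.zero_rpow hp.ne']
      · simp [slope_def_field, ht, Real.zero_rpow hp.ne']
    have hcont : Filter.Tendsto (fun t : ℝ => |t| ^ p) (nhdsWithin 0 {(0:ℝ)}ᶜ) (nhds 0) := by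
      have hca : ContinuousAt (fun t : ℝ => |t| ^ p) 0 :=
        (continuous_abs.continuousAt).rpow_const (Or.inr hp.le)
      have h0 : |(0:ℝ)| ^ p = 0 := by rw [abs_zero, Real.zero_rpow hp.ne']
      have := hca.tendsto.mono_left (nhdsWithin_le_nhds (s := {(0:ℝ)}ᶜ))
      rwa [h0] at this
    have h0 : ((p + 1) * |(0:ℝ)| ^ p) = 0 := by rw [abs_zero, Real.zero_rpow hp.ne', mul_zero]
    rw [h0]
    exact hcont.congr (fun t => (this t).symm)
  · have h1 : HasDerivAt (fun t : ℝ => t ^ (p + 1)) ((p + 1) * x ^ p) x := by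
      have := Real.hasDerivAt_rpow_const (x := x) (p := p + 1) (Or.inl hx.ne')
      simpa [show p + 1 - 1 = p by ring] using this
    rw [abs_of_pos hx]
    refine h1.congr_of_eventuallyEq ?_
    filter_upwards [eventually_gt_nhds hx] with t ht
    rw [abs_of_pos ht, Real.rpow_add_one (by linarith) p]

/-- the MVT consequence: `f a - f b = (q-1)|c|^(q-2) (a - b)` for some `c` with `|c-b| ≤ |a-b|`. -/
private lemma exists_mvt {q a b : ℝ} (hq1 : 2 < q) (hq2 : q < 3) (hab : a ≠ b) :
    ∃ c : ℝ, |c - b| ≤ |a - b| ∧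
      |a| ^ (q - 2) * a - |b| ^ (q - 2) * b = (q - 1) * |c| ^ (q - 2) * (a - b) := by
  have hp : 0 < q - 2 := by linarith
  have hp1 : q - 2 < 1 := by linarith
  have hder : ∀ x : ℝ, HasDerivAt (fun t : ℝ => |t| ^ (q - 2) * t)
      ((q - 1) * |x| ^ (q - 2)) x := by
    intro x
    have := hasDerivAt_abs_rpow_mul_self hp hp1 x
    simpa [show q - 2 + 1 = q - 1 by ring] using this
  rcases lt_or_gt_of_ne hab with h | h
  · obtain ⟨c, hc, heq⟩ := exists_hasDerivAt_eq_slope (fun t : ℝ => |t| ^ (q - 2) * t)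
      (fun x => (q - 1) * |x| ^ (q - 2)) h
      (fun x _ => (hder x).continuousAt.continuousWithinAt) (fun x _ => hder x)
    refine ⟨c, ?_, ?_⟩
    · rw [abs_sub_comm a b, abs_of_nonpos (by linarith [hc.1, hc.2] : c - b ≤ 0),
        abs_of_pos (by linarith : (0:ℝ) < b - a)]
      linarith [hc.1]
    · have hba : b - a ≠ 0 := by linarith [h]
      field_simp at heq
      nlinarith [heq]
  · obtain ⟨c, hc, heq⟩ := exists_hasDerivAt_eq_slope (fun t : ℝ => |t| ^ (q - 2) * t)
      (fun x => (q - 1) * |x| ^ (q - 2)) h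
      (fun x _ => (hder x).continuousAt.continuousWithinAt) (fun x _ => hder x)
    refine ⟨c, ?_, ?_⟩
    · rw [abs_of_nonneg (by linarith [hc.1] : (0:ℝ) ≤ c - b),
        abs_of_pos (by linarith : (0:ℝ) < a - b)]
      linarith [hc.2]
    · have hba : a - b ≠ 0 := by linarith [h]
      field_simp at heq
      nlinarith [heq]

/-- pointwise bound on the residual. -/
private lemma residual_bound {q a b : ℝ} (hq1 : 2 < q) (hq2 : q < 3) :
    |(|a| ^ (q - 2) * a - |b| ^ (q - 2) * b - (q - 1) * |b| ^ (q - 2) * (a - b))|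
      ≤ (q - 1) * |a - b| ^ (q - 1) := by
  rcases eq_or_ne a b with rfl | hab
  · simp [Real.zero_rpow (sub_ne_zero.mpr (by linarith : q ≠ 1))]
  obtain ⟨c, hc, heq⟩ := exists_mvt hq1 hq2 hab
  have key : |a| ^ (q - 2) * a - |b| ^ (q - 2) * b - (q - 1) * |b| ^ (q - 2) * (a - b)
      = (q - 1) * (|c| ^ (q - 2) - |b| ^ (q - 2)) * (a - b) := by
    rw [heq]; ring
  rw [key, abs_mul, abs_mul, abs_of_pos (by linarith : (0:ℝ) < q - 1)]
  have h1 : |(|c| ^ (q - 2) - |b| ^ (q - 2))| ≤ |c - b| ^ (q - 2) :=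
    abs_abs_rpow_sub_abs_rpow (by linarith) (by linarith)
  have h2 : |c - b| ^ (q - 2) ≤ |a - b| ^ (q - 2) :=
    Real.rpow_le_rpow (abs_nonneg _) hc (by linarith)
  have h3 : |a - b| ^ (q - 2) * |a - b| = |a - b| ^ (q - 1) := by
    rw [← Real.rpow_add_one (by simpa [sub_ne_zero] using hab) (q - 2)]
    congr 1
    ring
  calc (q - 1) * |(|c| ^ (q - 2) - |b| ^ (q - 2))| * |a - b|
      ≤ (q - 1) * (|a - b| ^ (q - 2)) * |a - b| := by
        apply mul_le_mul_of_nonneg_right _ (abs_nonneg _)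
        exact mul_le_mul_of_nonneg_left (h1.trans h2) (by linarith)
    _ = (q - 1) * |a - b| ^ (q - 1) := by rw [mul_assoc, h3]

/-- For `2 < q < 3`, a bounded domain `Ω` and `u, φ ∈ L^q(Ω)`, the
residual `𝓡(a,b) = |a|^(q-2) a - |b|^(q-2) b - (q-1) |b|^(q-2) (a-b)` satisfies
`‖𝓡(u,φ)‖_{L^{q'}(Ω)} ≤ (q-1) ‖u - φ‖_{L^q(Ω)}^{q-1}`, where `q' = q/(q-1)`. -/
theorem stmt_14 {N : ℕ} (Ω : Set (EuclideanSpace ℝ (Fin N)))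
    (hΩopen : IsOpen Ω) (hΩconn : IsConnected Ω) (hΩbdd : Bornology.IsBounded Ω)
    (q : ℝ) (hq1 : 2 < q) (hq2 : q < 3)
    (u φ : EuclideanSpace ℝ (Fin N) → ℝ)
    (hu : MemLp u (ENNReal.ofReal q) (volume.restrict Ω))
    (hφ : MemLp φ (ENNReal.ofReal q) (volume.restrict Ω)) :
    eLpNorm
        (fun x => |u x| ^ (q - 2) * u x - |φ x| ^ (q - 2) * φ x
          - (q - 1) * |φ x| ^ (q - 2) * (u x - φ x))
        (ENNReal.ofReal (q / (q - 1))) (volume.restrict Ω)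
      ≤ ENNReal.ofReal (q - 1)
        * (eLpNorm (u - φ) (ENNReal.ofReal q) (volume.restrict Ω)) ^ (q - 1) := by
  set μ := volume.restrict Ω
  set p' := ENNReal.ofReal (q / (q - 1))
  have hq1' : (0:ℝ) < q - 1 := by linarith
  -- pointwise bound then monotonicity
  have hmono : eLpNorm
      (fun x => |u x| ^ (q - 2) * u x - |φ x| ^ (q - 2) * φ x
        - (q - 1) * |φ x| ^ (q - 2) * (u x - φ x)) p' μ
      ≤ eLpNorm (fun x => (q - 1) * ‖(u - φ) x‖ ^ (q - 1)) p' μ := by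
    apply eLpNorm_mono
    intro x
    rw [Real.norm_eq_abs, Real.norm_eq_abs]
    have hb := residual_bound (a := u x) (b := φ x) hq1 hq2
    have hnn : 0 ≤ (q - 1) * ‖(u - φ) x‖ ^ (q - 1) := by positivity
    rw [abs_of_nonneg hnn]
    simpa [Pi.sub_apply, Real.norm_eq_abs] using hb
  refine hmono.trans ?_
  have hsmul : (fun x => (q - 1) * ‖(u - φ) x‖ ^ (q - 1))
      = (q - 1) • (fun x => ‖(u - φ) x‖ ^ (q - 1)) := by
    ext x; simp [smul_eq_mul]
  rw [hsmul, eLpNorm_const_smul]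
  have hrpow : eLpNorm (fun x => ‖(u - φ) x‖ ^ (q - 1)) p' μ
      = eLpNorm (u - φ) (p' * ENNReal.ofReal (q - 1)) μ ^ (q - 1) :=
    eLpNorm_norm_rpow (u - φ) hq1'
  rw [hrpow]
  have hexp : p' * ENNReal.ofReal (q - 1) = ENNReal.ofReal q := by
    rw [show p' = ENNReal.ofReal (q / (q - 1)) from rfl,
      ← ENNReal.ofReal_mul (by positivity)]
    congr 1
    field_simp
  rw [hexp]
  have hnorm : ‖(q - 1 : ℝ)‖ₑ = ENNReal.ofReal (q - 1) := by
    rw [← ofReal_norm_eq_enorm, Real.norm_eq_abs, abs_of_pos hq1']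
  rw [hnorm]
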